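/- Let G be a prime graph with at least 4 vertices, let A be a fully closed set of vertices of G, and let v ∈ A. If X ⊆ V(G)−{v}, |X| = 2, and ρ_{G∖v}(X) ≤ 1, then |X ∩ A| ≠ 1. -/

import Mathlib

open Finset

variable {V : Type} [Fintype V] [DecidableEq V]

open scoped Classical

/-- The rank over GF(2) of the `X × Y` submatrix of the adjacency matrix of `G`. -/
noncomputable def cutRankOn (G : SimpleGraph V) (X Y : Finset V) : ℕ :=
  (Matrix.of (fun (i : ↥X) (j : ↥Y) => if G.Adj i.1 j.1 then (1 : ZMod 2) else 0)).rank

/-- The cut-rank of `X` in the graph `G` restricted to the vertex set `S`: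
the rank over GF(2) of the `X × (S \ X)` submatrix of the adjacency matrix. -/
noncomputable def cutRank (G : SimpleGraph V) (S X : Finset V) : ℕ :=
  cutRankOn G X (S \ X)

/-- `A` gives a split of the graph `G` restricted to the vertex set `S`. -/
def IsSplit (G : SimpleGraph V) (S A : Finset V) : Prop :=
  A ⊆ S ∧ cutRank G S A ≤ 1 ∧ 2 ≤ A.card ∧ 2 ≤ (S \ A).card

/-- The graph `G` restricted to the vertex set `S` is prime: connected and with no split. -/
def IsPrime (G : SimpleGraph V) (S : Finset V) : Prop :=
  (G.induce (↑S : Set V)).Connected ∧ ∀ A, ¬ IsSplit G S A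

/-- `G` restricted to `S` is `k⁺ˡ`-rank-connected. -/
def RankConn (G : SimpleGraph V) (S : Finset V) (k l : ℤ) : Prop :=
  ∀ X ⊆ S, (cutRank G S X : ℤ) < k →
    min (X.card : ℤ) (((S \ X).card : ℤ)) < k + l

/-- `G` restricted to `S` is `k`-rank-connected. -/
def RankConnAll (G : SimpleGraph V) (S : Finset V) (k : ℤ) : Prop :=
  ∀ m : ℤ, m ≤ k → RankConn G S m 0

def SideA (G : SimpleGraph V) (v w x : V) : Prop := G.Adj v x ∧ ¬ G.Adj w x ∧ x ≠ w
def SideB (G : SimpleGraph V) (v w x : V) : Prop := G.Adj w x ∧ ¬ G.Adj v x ∧ x ≠ v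
def SideC (G : SimpleGraph V) (v w x : V) : Prop := G.Adj v x ∧ G.Adj w x

/-- `x` and `y` lie in different ones among the three sets
`N(v)−N(w)−{w}`, `N(w)−N(v)−{v}`, `N(v)∩N(w)`. -/
def PivotToggle (G : SimpleGraph V) (v w x y : V) : Prop :=
  (SideA G v w x ∧ SideB G v w y) ∨ (SideB G v w x ∧ SideA G v w y) ∨
  (SideA G v w x ∧ SideC G v w y) ∨ (SideC G v w x ∧ SideA G v w y) ∨
  (SideB G v w x ∧ SideC G v w y) ∨ (SideC G v w x ∧ SideB G v w y)

set_option linter.unusedSectionVars false in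
lemma pivotToggle_symm {G : SimpleGraph V} {v w x y : V}
    (h : PivotToggle G v w x y) : PivotToggle G v w y x := by
  unfold PivotToggle at h ⊢; tauto

/-- The graph `G ∧ vw` obtained by pivoting the edge `vw`: toggle adjacency across the
three sets and swap the labels of `v` and `w`. -/
def pivot (G : SimpleGraph V) (v w : V) : SimpleGraph V where
  Adj a b := a ≠ b ∧
    Xor' (G.Adj (Equiv.swap v w a) (Equiv.swap v w b))
         (PivotToggle G v w (Equiv.swap v w a) (Equiv.swap v w b))
  symm := by
    refine ⟨?_⟩
    intro a b h
    obtain ⟨hne, hx⟩ := h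
    refine ⟨hne.symm, ?_⟩
    have hA : G.Adj (Equiv.swap v w b) (Equiv.swap v w a) ↔
        G.Adj (Equiv.swap v w a) (Equiv.swap v w b) := SimpleGraph.adj_comm _ _ _
    have hT : PivotToggle G v w (Equiv.swap v w b) (Equiv.swap v w a) ↔
        PivotToggle G v w (Equiv.swap v w a) (Equiv.swap v w b) :=
      ⟨pivotToggle_symm, pivotToggle_symm⟩
    rw [hA, hT]
    exact hx
  loopless := by refine ⟨?_⟩; intro a h; exact h.1 rfl

/-- One pivot step along an edge. -/
def PivotStep (G H : SimpleGraph V) : Prop := ∃ v w, G.Adj v w ∧ H = pivot G v w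

/-- Pivot-equivalence: a sequence of pivots. -/
def PivotEquiv : SimpleGraph V → SimpleGraph V → Prop := Relation.ReflTransGen PivotStep

/-- `A` is a fully closed set of `G` restricted to `S`. -/
def FullyClosed (G : SimpleGraph V) (S A : Finset V) : Prop :=
  A ⊆ S ∧ cutRank G S A = 2 ∧ 2 < A.card ∧
    ∀ u ∈ S, u ∉ A → cutRank G S A < cutRank G S (insert u A)

/-- `{a,b,c}` is a triplet of `G` (on vertex set `univ`). -/
def Triplet (G : SimpleGraph V) (a b c : V) : Prop :=
  cutRank G Finset.univ {a, b, c} = 2 ∧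
  ∀ x ∈ ({a, b, c} : Finset V),
    cutRank G (Finset.univ \ {x}) (({a, b, c} : Finset V) \ {x}) = 2

/-- `B` is a `k`-branched set of `G` restricted to `S`. -/
inductive KBranched (G : SimpleGraph V) (S : Finset V) (k : ℕ) : Finset V → Prop
  | single (v : V) (hv : v ∈ S) (h : cutRank G S {v} ≤ k) : KBranched G S k {v}
  | split (B B' : Finset V) (hB : B ⊆ S) (h : cutRank G S B ≤ k)
      (h1 : B' ⊆ B) (h2 : B'.Nonempty) (h3 : B' ≠ B)
      (hb1 : KBranched G S k B') (hb2 : KBranched G S k (B \ B')) : KBranched G S k B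

/-- The rank-width of `G` restricted to `S`: the least `k` such that `S` is `k`-branched
(equivalently, the minimum width of a rank-decomposition). -/
noncomputable def rankWidth (G : SimpleGraph V) (S : Finset V) : ℕ :=
  sInf {k | S = ∅ ∨ KBranched G S k S}

/-- `A` is a titanic set of `G` restricted to `S`. -/
def Titanic (G : SimpleGraph V) (S A : Finset V) : Prop :=
  ∀ A1 A2 A3 : Finset V, A1 ∪ A2 ∪ A3 = A →
    Disjoint A1 A2 → Disjoint A1 A3 → Disjoint A2 A3 →
    cutRank G S A ≤ cutRank G S A1 ∨ cutRank G S A ≤ cutRank G S A2 ∨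
      cutRank G S A ≤ cutRank G S A3

section CutRankAux

variable {G : SimpleGraph V}

/-- Row `j` of the adjacency matrix over `GF(2)`. -/
noncomputable def adjRow (G : SimpleGraph V) (j : V) : V → ZMod 2 :=
  fun i => if G.Adj j i then 1 else 0

/-- Span of the rows indexed by `Y`. -/
noncomputable def colSpan (G : SimpleGraph V) (Y : Finset V) :
    Submodule (ZMod 2) (V → ZMod 2) :=
  Submodule.span (ZMod 2) (adjRow G '' (Y : Set V))

/-- Restriction of a vector to the coordinates in `X`. -/
noncomputable def resMap (X : Finset V) :
    (V → ZMod 2) →ₗ[ZMod 2] (↥X → ZMod 2) :=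
  LinearMap.funLeft (ZMod 2) (ZMod 2) (fun i => (i : V))

noncomputable def qdim (S : Submodule (ZMod 2) (V → ZMod 2)) (X : Finset V) : ℕ :=
  Module.finrank (ZMod 2) (S.map (resMap X))

lemma mem_ker_resMap {X : Finset V} {w : V → ZMod 2} :
    w ∈ LinearMap.ker (resMap X) ↔ ∀ i ∈ X, w i = 0 := by
  simp only [LinearMap.mem_ker, resMap, LinearMap.funLeft_apply]
  constructor
  · intro h i hi
    have := congrFun h ⟨i, hi⟩
    simpa using this
  · intro h
    funext i
    exact h i.1 i.2

lemma ker_resMap_antitone {X Y : Finset V} (h : X ⊆ Y) :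
    LinearMap.ker (resMap Y) ≤ LinearMap.ker (resMap (V := V) X) := by
  intro w hw
  rw [mem_ker_resMap] at hw ⊢
  exact fun i hi => hw i (h hi)

lemma ker_resMap_union (X Y : Finset V) :
    LinearMap.ker (resMap X) ⊓ LinearMap.ker (resMap Y) ≤
      LinearMap.ker (resMap (V := V) (X ∪ Y)) := by
  intro w hw
  rw [Submodule.mem_inf, mem_ker_resMap, mem_ker_resMap] at hw
  obtain ⟨h1, h2⟩ := hw
  rw [mem_ker_resMap]
  intro i hi
  rcases Finset.mem_union.1 hi with h | h
  · exact h1 i h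
  · exact h2 i h

set_option synthInstance.maxHeartbeats 1000000 in
lemma qdim_add_eq (S : Submodule (ZMod 2) (V → ZMod 2)) (X : Finset V) :
    qdim S X + Module.finrank (ZMod 2) ↥(S ⊓ LinearMap.ker (resMap X)) =
      Module.finrank (ZMod 2) ↥S := by
  classical
  have h := LinearMap.finrank_range_add_finrank_ker ((resMap X).domRestrict S)
  rw [LinearMap.range_domRestrict] at h
  have hk : LinearMap.ker ((resMap X).domRestrict S) =
      Submodule.comap S.subtype (S ⊓ LinearMap.ker (resMap X)) := by
    ext w
    simp [LinearMap.mem_ker, LinearMap.domRestrict_apply, w.2]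
  rw [hk] at h
  have he : Module.finrank (ZMod 2) ↥(Submodule.comap S.subtype (S ⊓ LinearMap.ker (resMap X)))
      = Module.finrank (ZMod 2) ↥(S ⊓ LinearMap.ker (resMap X)) :=
    (Submodule.comapSubtypeEquivOfLe (inf_le_left : S ⊓ LinearMap.ker (resMap X) ≤ S)).finrank_eq
  rw [he] at h
  exact h

lemma qdim_mono {S T : Submodule (ZMod 2) (V → ZMod 2)} (h : S ≤ T) (X : Finset V) :
    qdim S X ≤ qdim T X :=
  Submodule.finrank_mono (Submodule.map_mono h)

/-- Key subspace inequality. -/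
lemma qdim_submod (S1 S2 : Submodule (ZMod 2) (V → ZMod 2)) (X1 X2 : Finset V) :
    qdim (S1 ⊓ S2) (X1 ∪ X2) + qdim (S1 ⊔ S2) (X1 ∩ X2) ≤ qdim S1 X1 + qdim S2 X2 := by
  have e1 := qdim_add_eq S1 X1
  have e2 := qdim_add_eq S2 X2
  have e3 := qdim_add_eq (S1 ⊓ S2) (X1 ∪ X2)
  have e4 := qdim_add_eq (S1 ⊔ S2) (X1 ∩ X2)
  have mod1 := Submodule.finrank_sup_add_finrank_inf_eq S1 S2
  have mod2 := Submodule.finrank_sup_add_finrank_inf_eq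
    (S1 ⊓ LinearMap.ker (resMap X1)) (S2 ⊓ LinearMap.ker (resMap X2))
  have le1 : Module.finrank (ZMod 2)
      ↥((S1 ⊓ LinearMap.ker (resMap X1)) ⊓ (S2 ⊓ LinearMap.ker (resMap X2))) ≤
      Module.finrank (ZMod 2) ↥((S1 ⊓ S2) ⊓ LinearMap.ker (resMap (X1 ∪ X2))) := by
    apply Submodule.finrank_mono
    refine le_inf (inf_le_inf inf_le_left inf_le_left) ?_
    exact le_trans (inf_le_inf inf_le_right inf_le_right) (ker_resMap_union X1 X2)
  have le2 : Module.finrank (ZMod 2)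
      ↥((S1 ⊓ LinearMap.ker (resMap X1)) ⊔ (S2 ⊓ LinearMap.ker (resMap X2))) ≤
      Module.finrank (ZMod 2) ↥((S1 ⊔ S2) ⊓ LinearMap.ker (resMap (X1 ∩ X2))) := by
    apply Submodule.finrank_mono
    refine sup_le (le_inf (le_trans inf_le_left le_sup_left) ?_)
      (le_inf (le_trans inf_le_left le_sup_right) ?_)
    · exact le_trans inf_le_right (ker_resMap_antitone Finset.inter_subset_left)
    · exact le_trans inf_le_right (ker_resMap_antitone Finset.inter_subset_right)
  omega

lemma cutRankOn_eq_qdim (G : SimpleGraph V) (X Y : Finset V) :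
    cutRankOn G X Y = qdim (colSpan G Y) X := by
  unfold cutRankOn qdim Matrix.rank
  rw [Matrix.range_mulVecLin, colSpan, Submodule.map_span]
  have hset : ⇑(resMap X) '' (adjRow G '' (Y : Set V)) =
      Set.range (Matrix.of fun (i : ↥X) (j : ↥Y) =>
        if G.Adj i.1 j.1 then (1 : ZMod 2) else 0).transpose := by
    ext w
    constructor
    · rintro ⟨-, ⟨j, hj, rfl⟩, rfl⟩
      refine ⟨⟨j, hj⟩, ?_⟩
      funext i
      simp only [resMap, LinearMap.funLeft_apply, adjRow, Matrix.transpose_apply,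
        Matrix.of_apply]
      exact if_congr (G.adj_comm _ _) rfl rfl
    · rintro ⟨j, rfl⟩
      refine ⟨adjRow G j.1, ⟨j.1, j.2, rfl⟩, ?_⟩
      funext i
      simp only [resMap, LinearMap.funLeft_apply, adjRow, Matrix.transpose_apply,
        Matrix.of_apply]
      exact if_congr (G.adj_comm _ _) rfl rfl
  rw [hset]
  rfl

lemma colSpan_union (G : SimpleGraph V) (Y1 Y2 : Finset V) :
    colSpan G (Y1 ∪ Y2) = colSpan G Y1 ⊔ colSpan G Y2 := by
  unfold colSpan
  rw [Finset.coe_union, Set.image_union, Submodule.span_union]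

lemma colSpan_mono (G : SimpleGraph V) {Y1 Y2 : Finset V} (h : Y1 ⊆ Y2) :
    colSpan G Y1 ≤ colSpan G Y2 :=
  Submodule.span_mono (Set.image_mono (by exact_mod_cast h))

lemma cutRankOn_submod (G : SimpleGraph V) (X1 X2 Y1 Y2 : Finset V) :
    cutRankOn G (X1 ∪ X2) (Y1 ∩ Y2) + cutRankOn G (X1 ∩ X2) (Y1 ∪ Y2) ≤
      cutRankOn G X1 Y1 + cutRankOn G X2 Y2 := by
  rw [cutRankOn_eq_qdim, cutRankOn_eq_qdim, cutRankOn_eq_qdim, cutRankOn_eq_qdim]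
  have h1 : qdim (colSpan G (Y1 ∩ Y2)) (X1 ∪ X2) ≤
      qdim (colSpan G Y1 ⊓ colSpan G Y2) (X1 ∪ X2) :=
    qdim_mono (le_inf (colSpan_mono G Finset.inter_subset_left)
      (colSpan_mono G Finset.inter_subset_right)) _
  have h2 : qdim (colSpan G (Y1 ∪ Y2)) (X1 ∩ X2) =
      qdim (colSpan G Y1 ⊔ colSpan G Y2) (X1 ∩ X2) := by rw [colSpan_union]
  have h3 := qdim_submod (colSpan G Y1) (colSpan G Y2) X1 X2
  omega

lemma cutRank_submod (G : SimpleGraph V) (A B : Finset V) :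
    cutRank G Finset.univ (A ∪ B) + cutRank G Finset.univ (A ∩ B) ≤
      cutRank G Finset.univ A + cutRank G Finset.univ B := by
  unfold cutRank
  have h1 : Finset.univ \ (A ∪ B) = (Finset.univ \ A) ∩ (Finset.univ \ B) := by
    ext i
    simp only [Finset.mem_sdiff, Finset.mem_union, Finset.mem_inter, Finset.mem_univ, true_and]
    tauto
  have h2 : Finset.univ \ (A ∩ B) = (Finset.univ \ A) ∪ (Finset.univ \ B) := by
    ext i
    simp only [Finset.mem_sdiff, Finset.mem_union, Finset.mem_inter, Finset.mem_univ, true_and]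
    tauto
  rw [h1, h2]
  exact cutRankOn_submod G A B (Finset.univ \ A) (Finset.univ \ B)

lemma cutRankOn_comm (G : SimpleGraph V) (X Y : Finset V) :
    cutRankOn G X Y = cutRankOn G Y X := by
  unfold cutRankOn
  rw [← Matrix.rank_transpose]
  congr 1
  ext i j
  simp only [Matrix.transpose_apply, Matrix.of_apply]
  exact if_congr (G.adj_comm _ _) rfl rfl

lemma qdim_sup_le (S T : Submodule (ZMod 2) (V → ZMod 2)) (X : Finset V) :
    qdim (S ⊔ T) X ≤ qdim S X + qdim T X := by
  unfold qdim
  rw [Submodule.map_sup]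
  have := Submodule.finrank_sup_add_finrank_inf_eq (S.map (resMap X)) (T.map (resMap X))
  omega

lemma cutRankOn_insert_left (G : SimpleGraph V) (u : V) (X Y : Finset V) :
    cutRankOn G (insert u X) Y ≤ cutRankOn G X Y + 1 := by
  rw [cutRankOn_comm G (insert u X) Y, cutRankOn_comm G X Y,
    cutRankOn_eq_qdim, cutRankOn_eq_qdim]
  have h1 : colSpan G (insert u X) = Submodule.span (ZMod 2) {adjRow G u} ⊔ colSpan G X := by
    unfold colSpan
    rw [Finset.coe_insert, Set.image_insert_eq, Submodule.span_insert]
  rw [h1]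
  have h2 := qdim_sup_le (Submodule.span (ZMod 2) {adjRow G u}) (colSpan G X) Y
  have h3 : qdim (Submodule.span (ZMod 2) {adjRow G u}) Y ≤ 1 := by
    unfold qdim
    rw [Submodule.map_span, Set.image_singleton]
    by_cases hz : resMap Y (adjRow G u) = 0
    · rw [hz, Submodule.span_zero_singleton]
      simp
    · rw [finrank_span_singleton hz]
  omega

end CutRankAux

lemma aux_no_single {G : SimpleGraph V} (hcard : 4 ≤ Fintype.card V)
    (hG : IsPrime G Finset.univ) {A : Finset V} (hA : FullyClosed G Finset.univ A)
    {v : V} (hv : v ∈ A) {x y : V} (hxy : x ≠ y) (hvx : v ≠ x) (hvy : v ≠ y)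
    (hxA : x ∈ A) (hyA : y ∉ A)
    (hXr : cutRank G (Finset.univ \ {v}) {x, y} ≤ 1) : False := by
  obtain ⟨hAsub, hA2, hA3, hAfc⟩ := hA
  -- ρ(insert y A) ≥ 3
  have h5 : 2 < cutRank G Finset.univ (insert y A) := by
    have := hAfc y (Finset.mem_univ y) hyA
    rwa [hA2] at this
  -- ρ({v,x,y}) ≤ 2
  have hD : (Finset.univ \ {v}) \ ({x, y} : Finset V) =
      Finset.univ \ ({v, x, y} : Finset V) := by
    ext i
    simp only [Finset.mem_sdiff, Finset.mem_insert, Finset.mem_singleton, Finset.mem_univ,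
      true_and]
    tauto
  have h6 : cutRank G Finset.univ ({v, x, y} : Finset V) ≤ 2 := by
    unfold cutRank
    have h7 : ({v, x, y} : Finset V) = insert v ({x, y} : Finset V) := rfl
    calc cutRankOn G ({v, x, y} : Finset V) (Finset.univ \ ({v, x, y} : Finset V))
        ≤ cutRankOn G ({x, y} : Finset V) (Finset.univ \ ({v, x, y} : Finset V)) + 1 := by
          rw [h7]; exact cutRankOn_insert_left G v _ _
      _ ≤ 2 := by
          rw [← hD]
          have := hXr
          unfold cutRank at this
          omega
  -- submodularity
  have hsub := cutRank_submod G A ({v, x, y} : Finset V)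
  have hU : A ∪ ({v, x, y} : Finset V) = insert y A := by
    ext a
    simp only [Finset.mem_union, Finset.mem_insert, Finset.mem_singleton]
    constructor
    · rintro (h | h | h | h)
      · exact Or.inr h
      · exact Or.inr (h ▸ hv)
      · exact Or.inr (h ▸ hxA)
      · exact Or.inl h
    · rintro (h | h)
      · exact Or.inr (Or.inr (Or.inr h))
      · exact Or.inl h
  have hI : A ∩ ({v, x, y} : Finset V) = ({v, x} : Finset V) := by
    ext a
    simp only [Finset.mem_inter, Finset.mem_insert, Finset.mem_singleton]
    constructor
    · rintro ⟨ha, h | h | h⟩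
      · exact Or.inl h
      · exact Or.inr h
      · exact absurd (h ▸ ha) hyA
    · rintro (h | h)
      · exact ⟨h ▸ hv, Or.inl h⟩
      · exact ⟨h ▸ hxA, Or.inr (Or.inl h)⟩
  rw [hU, hI, hA2] at hsub
  have h8 : cutRank G Finset.univ ({v, x} : Finset V) ≤ 1 := by omega
  -- split
  refine hG.2 ({v, x} : Finset V) ⟨Finset.subset_univ _, h8, ?_, ?_⟩
  · rw [Finset.card_pair hvx]
  · rw [Finset.card_sdiff_of_subset (Finset.subset_univ _), Finset.card_univ, Finset.card_pair hvx]
    omega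

theorem fullyClosed_no_single {G : SimpleGraph V} (hcard : 4 ≤ Fintype.card V)
    (hG : IsPrime G Finset.univ) {A : Finset V} (hA : FullyClosed G Finset.univ A)
    {v : V} (hv : v ∈ A) {X : Finset V} (hX : X ⊆ Finset.univ \ {v})
    (hX2 : X.card = 2) (hXr : cutRank G (Finset.univ \ {v}) X ≤ 1) :
    (X ∩ A).card ≠ 1 := by
  intro h1
  obtain ⟨x, y, hxy, rfl⟩ := Finset.card_eq_two.1 hX2
  have hvx : v ≠ x := by
    intro h; subst h
    have := hX (Finset.mem_insert_self v {y})
    simp at this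
  have hvy : v ≠ y := by
    intro h; subst h
    have := hX (Finset.mem_insert_of_mem (Finset.mem_singleton_self v))
    simp at this
  by_cases hx : x ∈ A <;> by_cases hy : y ∈ A
  · have : ({x, y} : Finset V) ∩ A = {x, y} := by
      rw [Finset.inter_eq_left]
      intro a ha
      rcases Finset.mem_insert.1 ha with h | h
      · exact h ▸ hx
      · exact (Finset.mem_singleton.1 h) ▸ hy
    rw [this, Finset.card_pair hxy] at h1
    omega
  · exact aux_no_single hcard hG hA hv hxy hvx hvy hx hy hXr
  · have hXr' : cutRank G (Finset.univ \ {v}) {y, x} ≤ 1 := by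
      rwa [Finset.pair_comm y x]
    exact aux_no_single hcard hG hA hv hxy.symm hvy hvx hy hx hXr'
  · have : ({x, y} : Finset V) ∩ A = ∅ := by
      rw [Finset.eq_empty_iff_forall_notMem]
      intro a ha
      obtain ⟨h2, h3⟩ := Finset.mem_inter.1 ha
      rcases Finset.mem_insert.1 h2 with h | h
      · exact hx (h ▸ h3)
      · exact hy ((Finset.mem_singleton.1 h) ▸ h3)
    rw [this] at h1
    simp at h1
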